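/- For a linear interpolation of $w \in C^2[t_0, t_1]$ at the endpoints, the weighted truncation error of the L1 approximation of the Caputo derivative of order $\alpha \in (0,1)$ at $t_1$ satisfies $\left| \frac{1}{\Gamma(1-\alpha)} \int_{t_0}^{t_1} (t_1-s)^{-\alpha}[w'(s) - L'_{1,1}(s)]\,ds \right| \leq \frac{\alpha}{2\Gamma(3-\alpha)} \max_{t_0 \leq t \leq t_1}|w''(t)| \, \tau_1^{2-\alpha}$, where $\tau_1 = t_1 - t_0$ and $L_{1,1}$ is the linear interpolant of $w$ at $t_0, t_1$. -/

import Mathlib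

open Set Real MeasureTheory

private lemma aux_int (t0 t1 r : ℝ) (hr : -1 < r) :
    IntervalIntegrable (fun s => (t1 - s) ^ r) volume t0 t1 := by
  have h := (intervalIntegral.intervalIntegrable_rpow' (a := t1 - t0) (b := 0) hr).comp_sub_left t1
  simpa using h

private lemma aux_val (t0 t1 r : ℝ) (h01 : t0 ≤ t1) (hr : -1 < r) :
    ∫ s in t0..t1, (t1 - s) ^ r = (t1 - t0) ^ (r + 1) / (r + 1) := by
  have h := intervalIntegral.integral_comp_sub_left (a := t0) (b := t1)
    (fun x : ℝ => x ^ r) t1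
  rw [h, sub_self, integral_rpow (Or.inl hr),
    Real.zero_rpow (by linarith : r + 1 ≠ 0), sub_zero]

private lemma interp_bound (t0 t1 K : ℝ) (h01 : t0 < t1) (e E1 : ℝ → ℝ)
    (he : ContinuousOn e (Icc t0 t1))
    (hE1c : ContinuousOn E1 (Icc t0 t1))
    (hde : ∀ x ∈ Ioo t0 t1, HasDerivAt e (E1 x) x)
    (hlip : ∀ u v, t0 ≤ u → u ≤ v → v ≤ t1 → |E1 v - E1 u| ≤ K * (v - u))
    (h0 : e t0 = 0) (h1 : e t1 = 0) :
    ∀ s ∈ Icc t0 t1, |e s| ≤ K / 2 * (s - t0) * (t1 - s) := by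
  have ftc : ∀ u v, t0 ≤ u → u ≤ v → v ≤ t1 → e v - e u = ∫ x in u..v, E1 x := by
    intro u v hu huv hv
    have hIcc : Icc u v ⊆ Icc t0 t1 := Icc_subset_Icc hu hv
    exact (intervalIntegral.integral_eq_sub_of_hasDerivAt_of_le huv (he.mono hIcc)
      (fun x hx => hde x ⟨lt_of_le_of_lt hu hx.1, lt_of_lt_of_le hx.2 hv⟩)
      ((hE1c.mono hIcc).intervalIntegrable_of_Icc huv)).symm
  intro s hs
  rcases eq_or_lt_of_le hs.1 with h | hlt0
  · simp [← h, h0]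
  rcases eq_or_lt_of_le hs.2 with h | hlt1
  · simp [h, h1]
  -- Taylor-type estimates
  have hA : e t1 - e s - E1 s * (t1 - s) = ∫ u in s..t1, (E1 u - E1 s) := by
    rw [intervalIntegral.integral_sub
        ((hE1c.mono (Icc_subset_Icc hs.1 le_rfl)).intervalIntegrable_of_Icc hs.2)
        (intervalIntegrable_const)]
    rw [← ftc s t1 hs.1 hs.2 le_rfl, intervalIntegral.integral_const, smul_eq_mul]
    ring
  have hB : e t0 - e s + E1 s * (s - t0) = -∫ u in t0..s, (E1 u - E1 s) := by
    rw [intervalIntegral.integral_sub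
        ((hE1c.mono (Icc_subset_Icc le_rfl hs.2)).intervalIntegrable_of_Icc hs.1)
        (intervalIntegrable_const)]
    rw [← ftc t0 s le_rfl hs.1 hs.2, intervalIntegral.integral_const, smul_eq_mul]
    ring
  have hAbound : |e t1 - e s - E1 s * (t1 - s)| ≤ K / 2 * (t1 - s) ^ 2 := by
    rw [hA]
    calc |∫ u in s..t1, (E1 u - E1 s)| ≤ ∫ u in s..t1, |E1 u - E1 s| :=
          intervalIntegral.abs_integral_le_integral_abs hs.2
      _ ≤ ∫ u in s..t1, K * (u - s) := by
          apply intervalIntegral.integral_mono_on hs.2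
          · exact (((hE1c.mono (Icc_subset_Icc hs.1 le_rfl)).sub
              continuousOn_const).abs).intervalIntegrable_of_Icc hs.2
          · exact (ContinuousOn.intervalIntegrable_of_Icc hs.2 (by fun_prop))
          · intro u hu
            exact hlip s u hs.1 hu.1 hu.2
      _ = K / 2 * (t1 - s) ^ 2 := by
          rw [intervalIntegral.integral_const_mul]
          rw [intervalIntegral.integral_sub intervalIntegral.intervalIntegrable_id
            intervalIntegrable_const]
          rw [integral_id, intervalIntegral.integral_const, smul_eq_mul]
          ring
  have hBbound : |e t0 - e s + E1 s * (s - t0)| ≤ K / 2 * (s - t0) ^ 2 := by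
    rw [hB, abs_neg]
    calc |∫ u in t0..s, (E1 u - E1 s)| ≤ ∫ u in t0..s, |E1 u - E1 s| :=
          intervalIntegral.abs_integral_le_integral_abs hs.1
      _ ≤ ∫ u in t0..s, K * (s - u) := by
          apply intervalIntegral.integral_mono_on hs.1
          · exact (((hE1c.mono (Icc_subset_Icc le_rfl hs.2)).sub
              continuousOn_const).abs).intervalIntegrable_of_Icc hs.1
          · exact (ContinuousOn.intervalIntegrable_of_Icc hs.1 (by fun_prop))
          · intro u hu
            rw [abs_sub_comm]
            exact hlip u s hu.1 hu.2 hs.2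
      _ = K / 2 * (s - t0) ^ 2 := by
          rw [intervalIntegral.integral_const_mul]
          rw [intervalIntegral.integral_sub intervalIntegrable_const
            intervalIntegral.intervalIntegrable_id]
          rw [integral_id, intervalIntegral.integral_const, smul_eq_mul]
          ring
  -- combine
  have hkey : (t1 - t0) * e s = -((s - t0) * (e t1 - e s - E1 s * (t1 - s))
      + (t1 - s) * (e t0 - e s + E1 s * (s - t0))) := by
    rw [h0, h1]; ring
  have hsA : |(s - t0) * (e t1 - e s - E1 s * (t1 - s))|
      ≤ (s - t0) * (K / 2 * (t1 - s) ^ 2) := by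
    rw [abs_mul, abs_of_nonneg (by linarith : (0:ℝ) ≤ s - t0)]
    exact mul_le_mul_of_nonneg_left hAbound (by linarith)
  have hsB : |(t1 - s) * (e t0 - e s + E1 s * (s - t0))|
      ≤ (t1 - s) * (K / 2 * (s - t0) ^ 2) := by
    rw [abs_mul, abs_of_nonneg (by linarith : (0:ℝ) ≤ t1 - s)]
    exact mul_le_mul_of_nonneg_left hBbound (by linarith)
  have h2 : (t1 - t0) * |e s| ≤ (s - t0) * (K / 2 * (t1 - s) ^ 2)
      + (t1 - s) * (K / 2 * (s - t0) ^ 2) := by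
    rw [← abs_of_pos (show (0:ℝ) < t1 - t0 by linarith), ← abs_mul, hkey, abs_neg]
    calc _ ≤ _ := abs_add_le _ _
      _ ≤ _ := add_le_add hsA hsB
  have heq : (s - t0) * (K / 2 * (t1 - s) ^ 2) + (t1 - s) * (K / 2 * (s - t0) ^ 2)
      = (t1 - t0) * (K / 2 * (s - t0) * (t1 - s)) := by ring
  rw [heq] at h2
  exact le_of_mul_le_mul_left h2 (by linarith)

theorem stmt_4 (α t0 t1 : ℝ) (hα : α ∈ Set.Ioo (0:ℝ) 1) (h01 : t0 < t1)
    (w : ℝ → ℝ) (hw : ContDiffOn ℝ 2 w (Set.Icc t0 t1))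
    (K : ℝ) (hK : ∀ t ∈ Set.Icc t0 t1, |deriv (deriv w) t| ≤ K) :
    |(1 / Real.Gamma (1 - α)) *
        ∫ s in t0..t1, (t1 - s) ^ (-α) * (deriv w s - (w t1 - w t0) / (t1 - t0))| ≤
      α / (2 * Real.Gamma (3 - α)) * K * (t1 - t0) ^ (2 - α) := by
  obtain ⟨hα0, hα1⟩ := hα
  have hτ : (0:ℝ) < t1 - t0 := sub_pos.mpr h01
  have hK0 : 0 ≤ K := le_trans (abs_nonneg _) (hK t0 ⟨le_rfl, h01.le⟩)
  set c : ℝ := (w t1 - w t0) / (t1 - t0) with hc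
  set e : ℝ → ℝ := fun s => w s - w t0 - c * (s - t0) with he_def
  have he0 : e t0 = 0 := by simp [he_def]
  have he1 : e t1 = 0 := by
    simp only [he_def, hc]
    field_simp
    ring
  have hud : UniqueDiffOn ℝ (Icc t0 t1) := uniqueDiffOn_Icc h01
  have hwc : ContinuousOn w (Icc t0 t1) := hw.continuousOn
  set W1 : ℝ → ℝ := derivWithin w (Icc t0 t1) with hW1def
  have hW1cd : ContDiffOn ℝ 1 W1 (Icc t0 t1) := hw.derivWithin hud (by norm_num)
  have hW1c : ContinuousOn W1 (Icc t0 t1) := hW1cd.continuousOn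
  set W2 : ℝ → ℝ := derivWithin W1 (Icc t0 t1) with hW2def
  have hW2c : ContinuousOn W2 (Icc t0 t1) := hW1cd.continuousOn_derivWithin hud le_rfl
  have hmem : ∀ x ∈ Ioo t0 t1, Icc t0 t1 ∈ nhds x := fun x hx => Icc_mem_nhds hx.1 hx.2
  have hdw : ∀ x ∈ Ioo t0 t1, HasDerivAt w (W1 x) x := fun x hx =>
    ((hw.differentiableOn (by norm_num) x (Ioo_subset_Icc_self hx)).hasDerivWithinAt).hasDerivAt
      (hmem x hx)
  have hdW1 : ∀ x ∈ Ioo t0 t1, HasDerivAt W1 (W2 x) x := fun x hx =>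
    ((hW1cd.differentiableOn (by norm_num) x (Ioo_subset_Icc_self hx)).hasDerivWithinAt).hasDerivAt
      (hmem x hx)
  -- second-derivative bound
  have hW2K : ∀ x ∈ Icc t0 t1, |W2 x| ≤ K := by
    have hIoo : ∀ x ∈ Ioo t0 t1, |W2 x| ≤ K := by
      intro x hx
      have h1 : deriv w =ᶠ[nhds x] W1 := by
        filter_upwards [Ioo_mem_nhds hx.1 hx.2] with y hy
        exact (hdw y hy).deriv
      have h2 : deriv (deriv w) x = W2 x := by
        rw [Filter.EventuallyEq.deriv_eq h1, (hdW1 x hx).deriv]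
      rw [← h2]
      exact hK x (Ioo_subset_Icc_self hx)
    intro x hx
    have hcl : x ∈ closure (Ioo t0 t1) := by rwa [closure_Ioo h01.ne]
    have hne : (nhdsWithin x (Ioo t0 t1)).NeBot := mem_closure_iff_nhdsWithin_neBot.mp hcl
    have htd : Filter.Tendsto (fun y => |W2 y|) (nhdsWithin x (Ioo t0 t1)) (nhds (|W2 x|)) :=
      ((hW2c x hx).mono Ioo_subset_Icc_self).abs
    exact le_of_tendsto htd (eventually_mem_nhdsWithin.mono hIoo)
  set E1 : ℝ → ℝ := fun x => W1 x - c with hE1def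
  have hE1c : ContinuousOn E1 (Icc t0 t1) := hW1c.sub continuousOn_const
  have hec : ContinuousOn e (Icc t0 t1) := by
    apply (hwc.sub continuousOn_const).sub
    exact (continuousOn_const.mul ((continuousOn_id.sub continuousOn_const)))
  have hde : ∀ x ∈ Ioo t0 t1, HasDerivAt e (E1 x) x := by
    intro x hx
    have h := ((hdw x hx).sub_const (w t0)).sub
      (((hasDerivAt_id x).sub_const t0).const_mul c)
    simp only [mul_one] at h
    exact h
  have hdE1 : ∀ x ∈ Ioo t0 t1, HasDerivAt E1 (W2 x) x := fun x hx =>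
    (hdW1 x hx).sub_const c
  have hlip : ∀ u v, t0 ≤ u → u ≤ v → v ≤ t1 → |E1 v - E1 u| ≤ K * (v - u) := by
    intro u v hu huv hv
    have hIcc : Icc u v ⊆ Icc t0 t1 := Icc_subset_Icc hu hv
    have hftc : ∫ x in u..v, W2 x = E1 v - E1 u :=
      intervalIntegral.integral_eq_sub_of_hasDerivAt_of_le huv (hE1c.mono hIcc)
        (fun x hx => hdE1 x ⟨lt_of_le_of_lt hu hx.1, lt_of_lt_of_le hx.2 hv⟩)
        ((hW2c.mono hIcc).intervalIntegrable_of_Icc huv)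
    rw [← hftc]
    have := intervalIntegral.norm_integral_le_of_norm_le_const (C := K) (f := W2)
      (a := u) (b := v) (by
        intro x hx
        rw [Set.uIoc_of_le huv] at hx
        exact hW2K x ⟨le_trans hu hx.1.le, le_trans hx.2 hv⟩)
    rw [Real.norm_eq_abs, abs_of_nonneg (sub_nonneg.mpr huv)] at this
    exact this
  have hebound : ∀ s ∈ Icc t0 t1, |e s| ≤ K / 2 * (s - t0) * (t1 - s) :=
    interp_bound t0 t1 K h01 e E1 hec hE1c hde hlip he0 he1
  -- F and its derivative
  set F : ℝ → ℝ := fun s => (t1 - s) ^ (-α) * e s with hFdef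
  set F' : ℝ → ℝ := fun s => α * ((t1 - s) ^ (-α - 1) * e s) + (t1 - s) ^ (-α) * E1 s
    with hF'def
  have hF1 : F t1 = 0 := by simp [hFdef, he1]
  have hF0 : F t0 = 0 := by simp [hFdef, he0]
  have hdF : ∀ x ∈ Ioo t0 t1, HasDerivAt F (F' x) x := by
    intro x hx
    have hx1 : t1 - x ≠ 0 := sub_ne_zero.mpr hx.2.ne'
    have h1 : HasDerivAt (fun s : ℝ => (t1 - s) ^ (-α))
        ((-1) * (-α) * (t1 - x) ^ (-α - 1)) x :=
      HasDerivAt.rpow_const ((hasDerivAt_id x).const_sub t1) (Or.inl hx1)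
    have h2 := h1.mul (hde x hx)
    rw [show F' x = (-1) * (-α) * (t1 - x) ^ (-α - 1) * e x + (t1 - x) ^ (-α) * E1 x by
      simp only [hF'def]
      ring]
    exact h2
  -- continuity of F on Icc
  have hrc : ∀ r : ℝ, ∀ x, x < t1 → ContinuousAt (fun s : ℝ => (t1 - s) ^ r) x := by
    intro r x hx
    exact ((Real.continuousAt_rpow_const (t1 - x) r
      (Or.inl (sub_ne_zero.mpr (by linarith)))).comp
      ((continuous_const.sub continuous_id).continuousAt))
  have hFbound : ∀ s ∈ Icc t0 t1, |F s| ≤ K / 2 * (t1 - t0) * (t1 - s) ^ (1 - α) := by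
    intro s hs
    rcases eq_or_lt_of_le hs.2 with h | h
    · rw [h]
      simp [hFdef, he1, Real.zero_rpow (by linarith : 1 - α ≠ 0)]
    · have hpos : (0:ℝ) < t1 - s := by linarith
      have habs : |F s| = (t1 - s) ^ (-α) * |e s| := by
        rw [hFdef, abs_mul, abs_of_nonneg (Real.rpow_nonneg hpos.le _)]
      rw [habs]
      calc (t1 - s) ^ (-α) * |e s| ≤ (t1 - s) ^ (-α) * (K / 2 * (s - t0) * (t1 - s)) :=
            mul_le_mul_of_nonneg_left (hebound s hs) (Real.rpow_nonneg hpos.le _)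
        _ = K / 2 * (s - t0) * ((t1 - s) ^ (-α) * (t1 - s)) := by ring
        _ = K / 2 * (s - t0) * (t1 - s) ^ (1 - α) := by
            rw [show (1:ℝ) - α = -α + 1 by ring, Real.rpow_add_one hpos.ne' (-α)]
        _ ≤ K / 2 * (t1 - t0) * (t1 - s) ^ (1 - α) := by
            have h1 : (0:ℝ) ≤ (t1 - s) ^ (1 - α) := Real.rpow_nonneg hpos.le _
            have h2 : s - t0 ≤ t1 - t0 := by linarith [hs.2]
            have h3 : (0:ℝ) ≤ K / 2 := by linarith
            exact mul_le_mul_of_nonneg_right (mul_le_mul_of_nonneg_left h2 h3) h1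
  have hFc : ContinuousOn F (Icc t0 t1) := by
    intro x hx
    rcases eq_or_lt_of_le hx.2 with hx1 | hx1
    · rw [hx1]
      unfold ContinuousWithinAt
      rw [show F t1 = 0 from hF1]
      apply squeeze_zero_norm' (a := fun s => K / 2 * (t1 - t0) * (t1 - s) ^ (1 - α))
      · filter_upwards [eventually_mem_nhdsWithin] with s hs
        exact hFbound s hs
      · have hg : ContinuousAt (fun s : ℝ => K / 2 * (t1 - t0) * (t1 - s) ^ (1 - α)) t1 := by
          apply ContinuousAt.mul continuousAt_const
          exact ((Real.continuousAt_rpow_const (t1 - t1) (1 - α)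
            (Or.inr (by linarith))).comp ((continuous_const.sub continuous_id).continuousAt))
        have h2 := hg.tendsto.mono_left (nhdsWithin_le_nhds (s := Icc t0 t1))
        simpa [Real.zero_rpow (by linarith : 1 - α ≠ 0)] using h2
    · exact ((hrc (-α) x hx1).continuousWithinAt.mul (hec x hx))
  -- integrability machinery
  have hInt : ∀ r : ℝ, -1 < r → IntervalIntegrable (fun s => (t1 - s) ^ r) volume t0 t1 :=
    fun r hr => aux_int t0 t1 r hr
  have hdom : ∀ (f : ℝ → ℝ) (C : ℝ), ContinuousOn f (Ioo t0 t1) →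
      (∀ s ∈ Ioo t0 t1, |f s| ≤ C * (t1 - s) ^ (-α)) →
      IntervalIntegrable f volume t0 t1 := by
    intro f C hfc hfb
    rw [intervalIntegrable_iff_integrableOn_Ioc_of_le h01.le,
      integrableOn_Ioc_iff_integrableOn_Ioo]
    have hg : IntegrableOn (fun s => C * (t1 - s) ^ (-α)) (Ioo t0 t1) volume := by
      have h2 := (hInt (-α) (by linarith)).const_mul C
      rw [intervalIntegrable_iff_integrableOn_Ioc_of_le h01.le,
        integrableOn_Ioc_iff_integrableOn_Ioo] at h2
      exact h2
    apply Integrable.mono' hg (hfc.aestronglyMeasurable measurableSet_Ioo)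
    rw [ae_restrict_iff' measurableSet_Ioo]
    exact Filter.Eventually.of_forall fun s hs => by
      simpa [Real.norm_eq_abs] using hfb s hs
  have hrcOn : ∀ r : ℝ, ContinuousOn (fun s : ℝ => (t1 - s) ^ r) (Ioo t0 t1) :=
    fun r x hx => (hrc r x hx.2).continuousWithinAt
  obtain ⟨M, hM⟩ := (isCompact_Icc (a := t0) (b := t1)).exists_bound_of_continuousOn hE1c
  have hI2 : IntervalIntegrable (fun s => (t1 - s) ^ (-α) * E1 s) volume t0 t1 := by
    apply hdom (fun s => (t1 - s) ^ (-α) * E1 s) M ((hrcOn (-α)).mul (hE1c.mono Ioo_subset_Icc_self))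
    intro s hs
    have hpos : (0:ℝ) < t1 - s := by linarith [hs.2]
    rw [abs_mul, abs_of_nonneg (Real.rpow_nonneg hpos.le _), mul_comm]
    apply mul_le_mul_of_nonneg_right _ (Real.rpow_nonneg hpos.le _)
    have h3 := hM s (Ioo_subset_Icc_self hs)
    rw [Real.norm_eq_abs] at h3
    exact h3
  have hg1bound : ∀ s ∈ Icc t0 t1, s < t1 →
      |(t1 - s) ^ (-α - 1) * e s| ≤ K / 2 * (s - t0) * (t1 - s) ^ (-α) := by
    intro s hs hlt
    have hpos : (0:ℝ) < t1 - s := by linarith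
    rw [abs_mul, abs_of_nonneg (Real.rpow_nonneg hpos.le _)]
    calc (t1 - s) ^ (-α - 1) * |e s|
        ≤ (t1 - s) ^ (-α - 1) * (K / 2 * (s - t0) * (t1 - s)) :=
          mul_le_mul_of_nonneg_left (hebound s hs) (Real.rpow_nonneg hpos.le _)
      _ = K / 2 * (s - t0) * ((t1 - s) ^ (-α - 1) * (t1 - s)) := by ring
      _ = K / 2 * (s - t0) * (t1 - s) ^ (-α) := by
          rw [show -α = (-α - 1) + 1 by ring, Real.rpow_add_one hpos.ne' (-α - 1)]
          ring_nf
  have hI1 : IntervalIntegrable (fun s => (t1 - s) ^ (-α - 1) * e s) volume t0 t1 := by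
    apply hdom (fun s => (t1 - s) ^ (-α - 1) * e s) (K / 2 * (t1 - t0)) ((hrcOn (-α - 1)).mul (hec.mono Ioo_subset_Icc_self))
    intro s hs
    refine (hg1bound s (Ioo_subset_Icc_self hs) hs.2).trans ?_
    have hpos : (0:ℝ) < t1 - s := by linarith [hs.2]
    exact mul_le_mul_of_nonneg_right (mul_le_mul_of_nonneg_left
      (by linarith [hs.2] : s - t0 ≤ t1 - t0) (by linarith : (0:ℝ) ≤ K / 2))
      (Real.rpow_nonneg hpos.le _)
  have hIF' : IntervalIntegrable F' volume t0 t1 := by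
    rw [hF'def]
    exact (hI1.const_mul α).add hI2
  have hFTC : ∫ s in t0..t1, F' s = F t1 - F t0 :=
    intervalIntegral.integral_eq_sub_of_hasDerivAt_of_le h01.le hFc hdF hIF'
  -- rewrite the integrand
  have hne : ∀ᵐ x : ℝ, x ≠ t1 := by
    rw [MeasureTheory.ae_iff]
    simpa using Real.volume_singleton
  have hcongr : ∫ s in t0..t1, (t1 - s) ^ (-α) * (deriv w s - c)
      = ∫ s in t0..t1, (t1 - s) ^ (-α) * E1 s := by
    apply intervalIntegral.integral_congr_ae
    filter_upwards [hne] with x hx hxI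
    rw [Set.uIoc_of_le h01.le] at hxI
    have hxIoo : x ∈ Ioo t0 t1 := ⟨hxI.1, lt_of_le_of_ne hxI.2 hx⟩
    rw [(hdw x hxIoo).deriv]
  have hsplit : ∫ s in t0..t1, (t1 - s) ^ (-α) * E1 s
      = (∫ s in t0..t1, F' s) - α * ∫ s in t0..t1, (t1 - s) ^ (-α - 1) * e s := by
    rw [← intervalIntegral.integral_const_mul,
      ← intervalIntegral.integral_sub hIF' (hI1.const_mul α)]
    apply intervalIntegral.integral_congr
    intro s hs
    simp only [hF'def]
    ring
  have hJ : ∫ s in t0..t1, (t1 - s) ^ (-α) * (deriv w s - c)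
      = -(α * ∫ s in t0..t1, (t1 - s) ^ (-α - 1) * e s) := by
    rw [hcongr, hsplit, hFTC, hF0, hF1]
    ring
  -- bound on J
  have hbint : IntervalIntegrable (fun s => K / 2 * (s - t0) * (t1 - s) ^ (-α))
      volume t0 t1 := by
    apply hdom _ (K / 2 * (t1 - t0))
    · exact (continuousOn_const.mul (continuousOn_id.sub continuousOn_const)).mul
        (hrcOn (-α))
    · intro s hs
      have hpos : (0:ℝ) < t1 - s := by linarith [hs.2]
      have h1 : (0:ℝ) ≤ (t1 - s) ^ (-α) := Real.rpow_nonneg hpos.le _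
      rw [abs_mul, abs_of_nonneg h1, abs_mul,
        abs_of_nonneg (by linarith : (0:ℝ) ≤ K / 2),
        abs_of_nonneg (by linarith [hs.1] : (0:ℝ) ≤ s - t0)]
      have h2 : s - t0 ≤ t1 - t0 := by linarith [hs.2]
      have h3 : (0:ℝ) ≤ K / 2 := by linarith
      exact mul_le_mul_of_nonneg_right (mul_le_mul_of_nonneg_left h2 h3) h1
  have hJbound : |∫ s in t0..t1, (t1 - s) ^ (-α - 1) * e s|
      ≤ ∫ s in t0..t1, K / 2 * (s - t0) * (t1 - s) ^ (-α) := by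
    calc |∫ s in t0..t1, (t1 - s) ^ (-α - 1) * e s|
        ≤ ∫ s in t0..t1, |(t1 - s) ^ (-α - 1) * e s| :=
          intervalIntegral.abs_integral_le_integral_abs h01.le
      _ ≤ _ := by
          apply intervalIntegral.integral_mono_on h01.le hI1.abs hbint
          intro s hs
          rcases eq_or_lt_of_le hs.2 with h | h
          · rw [h]
            simp [he1, Real.zero_rpow (neg_ne_zero.mpr hα0.ne'),
              Real.rpow_nonneg, mul_nonneg, hτ.le, hK0]
          · exact hg1bound s hs h
  -- evaluate the bounding integral
  have hVval : ∫ s in t0..t1, K / 2 * (s - t0) * (t1 - s) ^ (-α)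
      = K / 2 * ((t1 - t0) * ((t1 - t0) ^ (-α + 1) / (-α + 1))
        - (t1 - t0) ^ (1 - α + 1) / (1 - α + 1)) := by
    have hsplit2 : EqOn (fun s => K / 2 * (s - t0) * (t1 - s) ^ (-α))
        (fun s => K / 2 * (t1 - t0) * (t1 - s) ^ (-α) - K / 2 * (t1 - s) ^ (1 - α))
        (uIcc t0 t1) := by
      intro s hsm
      rw [uIcc_of_le h01.le] at hsm
      rcases eq_or_lt_of_le hsm.2 with h | h
      · simp only [h, sub_self, Real.zero_rpow (neg_ne_zero.mpr hα0.ne'),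
          Real.zero_rpow (by linarith : 1 - α ≠ 0)]
        ring
      · have hpos : (0:ℝ) < t1 - s := by linarith
        simp only
        rw [show (1:ℝ) - α = -α + 1 by ring, Real.rpow_add_one hpos.ne' (-α)]
        ring
    rw [intervalIntegral.integral_congr hsplit2]
    rw [intervalIntegral.integral_sub ((hInt (-α) (by linarith)).const_mul _)
      ((hInt (1 - α) (by linarith)).const_mul _)]
    rw [intervalIntegral.integral_const_mul, intervalIntegral.integral_const_mul,
      aux_val t0 t1 (-α) h01.le (by linarith), aux_val t0 t1 (1 - α) h01.le (by linarith)]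
    ring
  -- final assembly
  have hΓpos : 0 < Real.Gamma (1 - α) := Real.Gamma_pos_of_pos (by linarith)
  have hΓ2 : Real.Gamma (2 - α) = (1 - α) * Real.Gamma (1 - α) := by
    rw [show (2:ℝ) - α = (1 - α) + 1 by ring, Real.Gamma_add_one (by linarith)]
  have hΓ3 : Real.Gamma (3 - α) = (2 - α) * ((1 - α) * Real.Gamma (1 - α)) := by
    rw [show (3:ℝ) - α = (2 - α) + 1 by ring, Real.Gamma_add_one (by linarith), hΓ2]
  have h1αne : (1:ℝ) - α ≠ 0 := by linarith
  have h2αne : (2:ℝ) - α ≠ 0 := by linarith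
  have hΓne : Real.Gamma (1 - α) ≠ 0 := ne_of_gt hΓpos
  have hfinal := hVval ▸ hJbound
  rw [hJ, abs_mul, abs_neg, abs_mul, abs_of_pos (one_div_pos.mpr hΓpos), abs_of_pos hα0]
  calc 1 / Real.Gamma (1 - α) * (α * |∫ s in t0..t1, (t1 - s) ^ (-α - 1) * e s|)
      ≤ 1 / Real.Gamma (1 - α) * (α * (K / 2 * ((t1 - t0) * ((t1 - t0) ^ (-α + 1) / (-α + 1))
        - (t1 - t0) ^ (1 - α + 1) / (1 - α + 1)))) := by
        apply mul_le_mul_of_nonneg_left _ (le_of_lt (one_div_pos.mpr hΓpos))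
        exact mul_le_mul_of_nonneg_left hfinal hα0.le
    _ = α / (2 * Real.Gamma (3 - α)) * K * (t1 - t0) ^ (2 - α) := by
        rw [show -α + 1 = 1 - α by ring, show (1:ℝ) - α + 1 = 2 - α by ring,
          show (t1 - t0) ^ ((2:ℝ) - α) = (t1 - t0) ^ ((1:ℝ) - α) * (t1 - t0) by
            rw [show (2:ℝ) - α = (1 - α) + 1 by ring, Real.rpow_add_one hτ.ne' (1 - α)],
          hΓ3]
        field_simp
        ring
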